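/- If trees t₁ and t₂ are related by a single application of a commutativity identity (permuting the children of a 𝓒-labelled node) and t₂ rewrites in one associativity-collapsing step to t₂', then there exists t₁' such that t₁ rewrites in one step to t₁' and t₁' is related to t₂' by a single commutativity application. -/

import Mathlib

inductive RTree (σ : Type) : Type
  | node : σ → List (RTree σ) → RTree σ

mutual
/-- One associativity-collapsing rewrite step on trees: at some position, a
subtree `a(f a(g) h)` with `a ∈ A` is replaced by `a(f g h)`. -/
inductive StepT {σ : Type} (A : Set σ) : RTree σ → RTree σ → Prop
  | root {a : σ} {f g h : List (RTree σ)} :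
      a ∈ A → StepT A (.node a (f ++ .node a g :: h)) (.node a (f ++ g ++ h))
  | congr {a : σ} {l l' : List (RTree σ)} :
      StepF A l l' → StepT A (.node a l) (.node a l')
/-- One associativity-collapsing rewrite step on forests. -/
inductive StepF {σ : Type} (A : Set σ) : List (RTree σ) → List (RTree σ) → Prop
  | head {t t' : RTree σ} {l : List (RTree σ)} :
      StepT A t t' → StepF A (t :: l) (t' :: l)
  | tail {t : RTree σ} {l l' : List (RTree σ)} :
      StepF A l l' → StepF A (t :: l) (t :: l')
end

mutual
/-- A single application of a commutativity identity: at exactly one position,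
a subtree `c(t₁ ⋯ tₙ)` with `c ∈ C` is replaced by `c(t_{σ(1)} ⋯ t_{σ(n)})`
for some permutation `σ`. -/
inductive CommT {σ : Type} (C : Set σ) : RTree σ → RTree σ → Prop
  | perm {c : σ} {l l' : List (RTree σ)} :
      c ∈ C → l.Perm l' → CommT C (.node c l) (.node c l')
  | congr {a : σ} {l l' : List (RTree σ)} :
      CommF C l l' → CommT C (.node a l) (.node a l')
/-- A single commutativity application inside a forest. -/
inductive CommF {σ : Type} (C : Set σ) : List (RTree σ) → List (RTree σ) → Prop
  | head {t t' : RTree σ} {l : List (RTree σ)} :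
      CommT C t t' → CommF C (t :: l) (t' :: l)
  | tail {t : RTree σ} {l l' : List (RTree σ)} :
      CommF C l l' → CommF C (t :: l) (t :: l')
end

-- decomposition of StepF
theorem stepF_decomp {σ : Type} {A : Set σ} :
    ∀ {l l' : List (RTree σ)}, StepF A l l' →
      ∃ p t t' q, StepT A t t' ∧ l = p ++ t :: q ∧ l' = p ++ t' :: q := by
  intro l
  induction l with
  | nil => intro l' h; nomatch h
  | cons a l ih =>
    intro l' h
    cases h with
    | head h => exact ⟨[], _, _, _, h, rfl, rfl⟩
    | tail h =>
      obtain ⟨p, t, t', q, h1, rfl, rfl⟩ := ih h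
      exact ⟨a :: p, t, t', q, h1, rfl, rfl⟩

theorem stepF_of_decomp {σ : Type} {A : Set σ} {t t' : RTree σ}
    (h : StepT A t t') : ∀ (p q : List (RTree σ)), StepF A (p ++ t :: q) (p ++ t' :: q) := by
  intro p q
  induction p with
  | nil => exact StepF.head h
  | cons a p ih => exact StepF.tail ih

theorem commF_decomp {σ : Type} {C : Set σ} :
    ∀ {l l' : List (RTree σ)}, CommF C l l' →
      ∃ p t t' q, CommT C t t' ∧ l = p ++ t :: q ∧ l' = p ++ t' :: q := by
  intro l
  induction l with
  | nil => intro l' h; nomatch h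
  | cons a l ih =>
    intro l' h
    cases h with
    | head h => exact ⟨[], _, _, _, h, rfl, rfl⟩
    | tail h =>
      obtain ⟨p, t, t', q, h1, rfl, rfl⟩ := ih h
      exact ⟨a :: p, t, t', q, h1, rfl, rfl⟩

theorem commF_of_decomp {σ : Type} {C : Set σ} {t t' : RTree σ}
    (h : CommT C t t') : ∀ (p q : List (RTree σ)), CommF C (p ++ t :: q) (p ++ t' :: q) := by
  intro p q
  induction p with
  | nil => exact CommF.head h
  | cons a p ih => exact CommF.tail ih

theorem commF_append_left {σ : Type} {C : Set σ} {l l' : List (RTree σ)}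
    (h : CommF C l l') (u : List (RTree σ)) : CommF C (u ++ l) (u ++ l') := by
  induction u with
  | nil => exact h
  | cons a u ih => exact CommF.tail ih

theorem commF_append_right {σ : Type} {C : Set σ} {l l' : List (RTree σ)}
    (h : CommF C l l') (v : List (RTree σ)) : CommF C (l ++ v) (l' ++ v) := by
  obtain ⟨p, t, t', q, h1, rfl, rfl⟩ := commF_decomp h
  simpa [List.append_assoc] using commF_of_decomp h1 p (q ++ v)

theorem list_split {α : Type*} :
    ∀ {p : List α} {s : α} {q f : List α} {x : α} {h : List α},
      p ++ s :: q = f ++ x :: h →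
      (p = f ∧ s = x ∧ q = h) ∨
      (∃ w, f = p ++ s :: w ∧ q = w ++ x :: h) ∨
      (∃ w, p = f ++ x :: w ∧ h = w ++ s :: q) := by
  intro p
  induction p with
  | nil =>
    intro s q f x h e
    cases f with
    | nil => simp_all
    | cons b f' =>
      simp only [List.nil_append, List.cons_append, List.cons.injEq] at e
      exact Or.inr (Or.inl ⟨f', by simp [e.1, e.2], e.2⟩)
  | cons a p' ih =>
    intro s q f x h e
    cases f with
    | nil =>
      simp only [List.cons_append, List.nil_append, List.cons.injEq] at e
      exact Or.inr (Or.inr ⟨p', by simp [e.1, e.2], e.2.symm⟩)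
    | cons b f' =>
      simp only [List.cons_append, List.cons.injEq] at e
      rcases ih e.2 with ⟨rfl, rfl, rfl⟩ | ⟨w, hw1, hw2⟩ | ⟨w, hw1, hw2⟩
      · exact Or.inl ⟨by rw [e.1], rfl, rfl⟩
      · exact Or.inr (Or.inl ⟨w, by simp [e.1, hw1], hw2⟩)
      · exact Or.inr (Or.inr ⟨w, by simp [← e.1, hw1], hw2⟩)

theorem commF_split {σ : Type} {C : Set σ} {l f h : List (RTree σ)} {x : RTree σ}
    (hc : CommF C l (f ++ x :: h)) :
    (∃ y, l = f ++ y :: h ∧ CommT C y x) ∨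
    (∃ f', l = f' ++ x :: h ∧ CommF C f' f) ∨
    (∃ h', l = f ++ x :: h' ∧ CommF C h' h) := by
  obtain ⟨p, s, s', q, h1, rfl, he⟩ := commF_decomp hc
  rcases list_split he.symm with ⟨rfl, rfl, rfl⟩ | ⟨w, rfl, rfl⟩ | ⟨w, rfl, rfl⟩
  · exact Or.inl ⟨s, rfl, h1⟩
  · exact Or.inr (Or.inl ⟨p ++ s :: w, by simp, commF_of_decomp h1 p w⟩)
  · exact Or.inr (Or.inr ⟨w ++ s :: q, by simp, commF_of_decomp h1 w q⟩)

theorem perm_cancel {α : Type*} {p q f h : List α} {t : α}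
    (hp : (p ++ t :: q).Perm (f ++ t :: h)) : (p ++ q).Perm (f ++ h) :=
  ((List.perm_middle.symm.trans hp).trans List.perm_middle).cons_inv

theorem perm_mid {α : Type*} {p q f h : List α} (g : List α)
    (hp : (p ++ q).Perm (f ++ h)) : (p ++ g ++ q).Perm (f ++ g ++ h) := by
  induction g with
  | nil => simpa using hp
  | cons a g ih =>
    have l1 : (p ++ (a :: g) ++ q) = p ++ a :: (g ++ q) := by simp
    have r1 : (f ++ (a :: g) ++ h) = f ++ a :: (g ++ h) := by simp
    rw [l1, r1]
    refine List.perm_middle.trans ((List.Perm.cons a ?_).trans List.perm_middle.symm)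
    simpa [List.append_assoc] using ih

/-- If `t₁` and `t₂` are related by a single commutativity application and
`t₂` rewrites in one associativity-collapsing step to `t₂'`, then `t₁`
rewrites in one step to some `t₁'` related to `t₂'` by a single commutativity
application. -/
theorem comm_step_commutation {σ : Type} (A C : Set σ) (t₁ t₂ t₂' : RTree σ)
    (hc : CommT C t₁ t₂) (hs : StepT A t₂ t₂') :
    ∃ t₁', StepT A t₁ t₁' ∧ CommT C t₁' t₂' := by
  refine CommT.rec
    (motive_1 := fun x y _ => ∀ z, StepT A y z → ∃ w, StepT A x w ∧ CommT C w z)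
    (motive_2 := fun x y _ => ∀ z, StepF A y z → ∃ w, StepF A x w ∧ CommF C w z)
    ?_ ?_ ?_ ?_ hc t₂' hs
  · -- perm case
    intro c l l' hcC hp z hz
    cases hz with
    | root ha =>
      rename_i f g h
      have hmem : RTree.node c g ∈ l :=
        hp.symm.subset (List.mem_append.2 (Or.inr List.mem_cons_self))
      obtain ⟨p, q, rfl⟩ := List.append_of_mem hmem
      refine ⟨RTree.node c (p ++ g ++ q), StepT.root ha, CommT.perm hcC ?_⟩
      exact perm_mid g (perm_cancel hp)
    | congr hsf =>
      obtain ⟨u, t, t', v, hst, rfl, rfl⟩ := stepF_decomp hsf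
      have hmem : t ∈ l := hp.symm.subset (List.mem_append.2 (Or.inr List.mem_cons_self))
      obtain ⟨p, q, rfl⟩ := List.append_of_mem hmem
      refine ⟨RTree.node c (p ++ t' :: q), StepT.congr (stepF_of_decomp hst p q),
        CommT.perm hcC ?_⟩
      exact List.perm_middle.trans (((perm_cancel hp).cons t').trans List.perm_middle.symm)
  · -- congr case
    intro a l l' hcf ih z hz
    cases hz with
    | congr hsf =>
      obtain ⟨l₀, h1, h2⟩ := ih _ hsf
      exact ⟨RTree.node a l₀, StepT.congr h1, CommT.congr h2⟩
    | root ha =>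
      rename_i f g h
      rcases commF_split hcf with ⟨y, rfl, hy⟩ | ⟨f', rfl, hf⟩ | ⟨h', rfl, hh⟩
      · cases hy with
        | perm hc' hp =>
          refine ⟨RTree.node a (f ++ _ ++ h), StepT.root ha, CommT.perm hc' ?_⟩
          exact ((hp.append_left f).append_right h)
        | congr hm =>
          refine ⟨RTree.node a (f ++ _ ++ h), StepT.root ha, CommT.congr ?_⟩
          simpa [List.append_assoc] using commF_append_left (commF_append_right hm h) f
      · refine ⟨RTree.node a (f' ++ g ++ h), StepT.root ha, CommT.congr ?_⟩
        simpa [List.append_assoc] using commF_append_right hf (g ++ h)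
      · refine ⟨RTree.node a (f ++ g ++ h'), StepT.root ha, CommT.congr ?_⟩
        simpa [List.append_assoc] using commF_append_left hh (f ++ g)
  · -- CommF.head case
    intro t t' l hct ih z hz
    cases hz with
    | head hst =>
      obtain ⟨t₀, h1, h2⟩ := ih _ hst
      exact ⟨t₀ :: l, StepF.head h1, CommF.head h2⟩
    | tail hsf =>
      exact ⟨t :: _, StepF.tail hsf, CommF.head hct⟩
  · -- CommF.tail case
    intro t l l' hcf ih z hz
    cases hz with
    | head hst =>
      exact ⟨_ :: l, StepF.head hst, CommF.tail hcf⟩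
    | tail hsf =>
      obtain ⟨l₀, h1, h2⟩ := ih _ hsf
      exact ⟨t :: l₀, StepF.tail h1, CommF.tail h2⟩
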